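/- arXiv:1302.5653 — 2 statements merged into one kernel-verified Lean document; each statement's English description precedes it below -/
import Mathlib

section
/- Let X be a Polish space and 𝒦 a topologically invariant family of closed subsets of X. If B and B' are 𝒦-absorptive sets in X, then for any open set V ⊆ X and any open cover 𝒰 of V there is a homeomorphism h : V → V such that h(V ∩ B) = V ∩ B' and (h, id_V) ≺ 𝒰. In particular, any two 𝒦-absorptive sets in X are ambiently homeomorphic. -/
open Set Topology

/-- `σ𝒦`: the family of countable unions of members of `𝒦`. -/
def sigmaFam {X : Type*} (𝒦 : Set (Set X)) : Set (Set X) :=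
  {A | ∃ f : ℕ → Set X, (∀ n, f n ∈ 𝒦) ∧ A = ⋃ n, f n}

/-- `𝒦` is topologically invariant: `𝒦 = {h(K) : K ∈ 𝒦}` for every homeomorphism `h`. -/
def TopInvariant {X : Type*} [TopologicalSpace X] (𝒦 : Set (Set X)) : Prop :=
  ∀ h : X ≃ₜ X, (fun K => h '' K) '' 𝒦 = 𝒦

/-- `B` is `𝒦`-absorptive: `B ∈ σ𝒦` and for each `K ∈ 𝒦`, each open `V` and each open
cover `𝒰` of `V` there is a homeomorphism `h : V → V` with `h(K ∩ V) ⊆ B ∩ V` and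
`(h, id_V) ≺ 𝒰`. -/
def IsAbsorptive {X : Type*} [TopologicalSpace X] (𝒦 : Set (Set X)) (B : Set X) : Prop :=
  B ∈ sigmaFam 𝒦 ∧
    ∀ K ∈ 𝒦, ∀ V : Set X, IsOpen V →
      ∀ 𝒰 : Set (Set X), (∀ u ∈ 𝒰, IsOpen u) → V ⊆ ⋃₀ 𝒰 →
        ∃ h : V ≃ₜ V, (∀ x : V, (x : X) ∈ K → (h x : X) ∈ B) ∧
          ∀ x : V, (h x : X) = (x : X) ∨ ∃ u ∈ 𝒰, (h x : X) ∈ u ∧ (x : X) ∈ u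

open Metric Filter ENNReal

noncomputable section

namespace AbsorbAux

variable {X : Type*} [MetricSpace X]

/-- truncated distance to a set (equals 1 when the set is empty). -/
def nd (s : Set X) (x : X) : ℝ := (min 1 (EMetric.infEdist x s)).toReal

lemma nd_nonneg (s : Set X) (x : X) : 0 ≤ nd s x := ENNReal.toReal_nonneg

lemma nd_ne_top (s : Set X) (x : X) : min 1 (EMetric.infEdist x s) ≠ ⊤ := by
  intro h
  have := min_le_left 1 (EMetric.infEdist x s)
  rw [h] at this
  simp at this

lemma nd_le_one (s : Set X) (x : X) : nd s x ≤ 1 := by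
  have h : min 1 (EMetric.infEdist x s) ≤ (1 : ℝ≥0∞) := min_le_left _ _
  have := ENNReal.toReal_mono (by simp) h
  simpa [nd] using this

lemma nd_le_dist {s : Set X} {y : X} (x : X) (hy : y ∈ s) : nd s x ≤ dist x y := by
  have h1 : min 1 (EMetric.infEdist x s) ≤ edist x y :=
    le_trans (min_le_right _ _) (EMetric.infEdist_le_edist_of_mem hy)
  have := ENNReal.toReal_mono (edist_ne_top x y) h1
  rwa [← dist_edist] at this

lemma nd_lip (s : Set X) (x y : X) : nd s x ≤ nd s y + dist x y := by
  have h1 : EMetric.infEdist x s ≤ EMetric.infEdist y s + edist x y :=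
    EMetric.infEdist_le_infEdist_add_edist
  have h2 : min 1 (EMetric.infEdist x s) ≤ min 1 (EMetric.infEdist y s) + edist x y := by
    rcases le_total (1 : ℝ≥0∞) (EMetric.infEdist y s) with hy1 | hy1
    · calc min 1 (EMetric.infEdist x s) ≤ 1 := min_le_left _ _
        _ = min 1 (EMetric.infEdist y s) + 0 := by rw [min_eq_left hy1, add_zero]
        _ ≤ _ := by gcongr; exact zero_le
    · calc min 1 (EMetric.infEdist x s) ≤ EMetric.infEdist x s := min_le_right _ _
        _ ≤ EMetric.infEdist y s + edist x y := h1
        _ = min 1 (EMetric.infEdist y s) + edist x y := by rw [min_eq_right hy1]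
  have h3 := ENNReal.toReal_mono (by
      exact ENNReal.add_ne_top.2 ⟨nd_ne_top s y, edist_ne_top x y⟩) h2
  rw [ENNReal.toReal_add (nd_ne_top s y) (edist_ne_top x y)] at h3
  rw [← dist_edist] at h3
  exact h3

lemma nd_pos {s : Set X} (hs : IsClosed s) {x : X} (hx : x ∉ s) : 0 < nd s x := by
  have h1 : 0 < EMetric.infEdist x s := by
    refine (EMetric.infEdist_pos_iff_notMem_closure).2 ?_
    rwa [hs.closure_eq]
  refine ENNReal.toReal_pos ?_ (nd_ne_top s x)
  simp only [ne_eq, min_eq_top, lt_min_iff] at *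
  exact ne_of_gt (lt_min one_pos h1)

lemma nd_eq_zero_of_mem {s : Set X} {x : X} (hx : x ∈ s) : nd s x = 0 := by
  have := nd_le_dist (s := s) x hx
  simp only [dist_self] at this
  exact le_antisymm this (nd_nonneg s x)


/-! ### the control function `eps` -/

def epsSet (𝒰 : Set (Set X)) (x : X) : Set ℝ := insert 0 ((fun u => nd uᶜ x) '' 𝒰)

lemma epsSet_nonempty (𝒰 : Set (Set X)) (x : X) : (epsSet 𝒰 x).Nonempty :=
  ⟨0, mem_insert _ _⟩

lemma epsSet_bddAbove (𝒰 : Set (Set X)) (x : X) : BddAbove (epsSet 𝒰 x) := by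
  refine ⟨1, fun r hr => ?_⟩
  rcases hr with rfl | ⟨u, _, rfl⟩
  · norm_num
  · exact nd_le_one _ _

/-- The control function associated to an open set `V` and a cover `𝒰`. -/
def eps (V : Set X) (𝒰 : Set (Set X)) (x : X) : ℝ :=
  min (nd Vᶜ x) (sSup (epsSet 𝒰 x))

lemma eps_nonneg (V : Set X) (𝒰 : Set (Set X)) (x : X) : 0 ≤ eps V 𝒰 x :=
  le_min (nd_nonneg _ _) (le_csSup (epsSet_bddAbove 𝒰 x) (mem_insert _ _))

lemma eps_le_nd (V : Set X) (𝒰 : Set (Set X)) (x : X) : eps V 𝒰 x ≤ nd Vᶜ x :=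
  min_le_left _ _

lemma eps_lip (V : Set X) (𝒰 : Set (Set X)) (x y : X) :
    eps V 𝒰 x ≤ eps V 𝒰 y + dist x y := by
  have h : sSup (epsSet 𝒰 x) ≤ sSup (epsSet 𝒰 y) + dist x y := by
    refine csSup_le (epsSet_nonempty 𝒰 x) (fun r hr => ?_)
    rcases hr with rfl | ⟨u, hu, rfl⟩
    · have h0 : (0:ℝ) ≤ sSup (epsSet 𝒰 y) :=
        le_csSup (epsSet_bddAbove 𝒰 y) (mem_insert _ _)
      have := dist_nonneg (x := x) (y := y)
      linarith
    · refine le_trans (nd_lip uᶜ x y) ?_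
      gcongr
      exact le_csSup (epsSet_bddAbove 𝒰 y) (Or.inr ⟨u, hu, rfl⟩)
  unfold eps
  rw [← min_add_add_right]
  exact le_min (le_trans (min_le_left _ _) (nd_lip _ _ _))
    (le_trans (min_le_right _ _) h)

lemma eps_pos {V : Set X} (hV : IsOpen V) {𝒰 : Set (Set X)} (h𝒰 : ∀ u ∈ 𝒰, IsOpen u)
    (hcov : V ⊆ ⋃₀ 𝒰) {x : X} (hx : x ∈ V) : 0 < eps V 𝒰 x := by
  refine lt_min (nd_pos hV.isClosed_compl (by simpa using hx)) ?_
  obtain ⟨u, hu, hxu⟩ := hcov hx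
  have h1 : 0 < nd uᶜ x := nd_pos (h𝒰 u hu).isClosed_compl (by simpa using hxu)
  exact lt_of_lt_of_le h1 (le_csSup (epsSet_bddAbove 𝒰 x) (Or.inr ⟨u, hu, rfl⟩))

lemma eps_extract {V : Set X} {𝒰 : Set (Set X)} {x y : X}
    (hne : y ≠ x) (hd : dist y x ≤ eps V 𝒰 x / 4) :
    ∃ u ∈ 𝒰, y ∈ u ∧ x ∈ u := by
  have hdp : 0 < dist y x := dist_pos.2 hne
  have h1 : 2 * dist y x < sSup (epsSet 𝒰 x) := by
    have := min_le_right (nd Vᶜ x) (sSup (epsSet 𝒰 x))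
    have heps : eps V 𝒰 x ≤ sSup (epsSet 𝒰 x) := this
    linarith
  obtain ⟨r, hr, hlt⟩ := exists_lt_of_lt_csSup (epsSet_nonempty 𝒰 x) h1
  rcases hr with rfl | ⟨u, hu, rfl⟩
  · linarith
  · refine ⟨u, hu, ?_, ?_⟩
    · by_contra hyu
      have : nd uᶜ x ≤ dist x y := nd_le_dist x (by simpa using hyu)
      rw [dist_comm] at this
      linarith
    · by_contra hxu
      have : nd uᶜ x = 0 := nd_eq_zero_of_mem (by simpa using hxu)
      linarith

/-! ### homeomorphisms that are the identity off a set -/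

lemma idOff_symm {s : Set X} (f : X ≃ₜ X) (h : ∀ x ∉ s, f x = x) :
    ∀ x ∉ s, f.symm x = x := by
  intro x hx
  conv_lhs => rw [← h x hx]
  rw [Homeomorph.symm_apply_apply]

lemma idOff_mem {s : Set X} (f : X ≃ₜ X) (h : ∀ x ∉ s, f x = x) :
    ∀ x ∈ s, f x ∈ s := by
  intro x hx
  by_contra hfx
  have h2 := idOff_symm f h (f x) hfx
  rw [Homeomorph.symm_apply_apply] at h2
  rw [← h2] at hfx
  exact hfx hx

lemma inv_mem {𝒦 : Set (Set X)} (hinv : TopInvariant 𝒦) (g : X ≃ₜ X) {K : Set X}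
    (hK : K ∈ 𝒦) : g '' K ∈ 𝒦 := by
  rw [← hinv g]
  exact mem_image_of_mem _ hK


/-! ### extending a homeomorphism of an open set by the identity -/

lemma extendHomeo {W : Set X} (hW : IsOpen W) (e : W ≃ₜ W)
    (he : ∀ z : W, dist ((e z : X)) (z : X) ≤ (1/2) * nd Wᶜ (z : X)) :
    ∃ E : X ≃ₜ X, (∀ z : W, E (z : X) = ((e z : X))) ∧ (∀ x, x ∉ W → E x = x) := by
  -- the inverse moves points by at most `nd Wᶜ`
  have he' : ∀ z : W, dist ((e.symm z : X)) (z : X) ≤ nd Wᶜ (z : X) := by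
    intro z
    set w : W := e.symm z with hw
    have hez : e w = z := e.apply_symm_apply z
    have h1 : dist ((e w : X)) (w : X) ≤ (1/2) * nd Wᶜ (w : X) := he w
    rw [hez] at h1
    have h2 : nd Wᶜ (w : X) ≤ nd Wᶜ (z : X) + dist (w : X) (z : X) := nd_lip _ _ _
    have h3 : dist ((w : X)) (z : X) = dist ((z:X)) ((w:X)) := dist_comm _ _
    have hnn := nd_nonneg Wᶜ (z : X)
    rw [dist_comm] at h1
    linarith [h1, h2]
  have heW : ∀ z : W, dist ((e z : X)) (z : X) ≤ nd Wᶜ (z : X) := by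
    intro z
    have := he z
    have := nd_nonneg Wᶜ (z : X)
    linarith
  classical
  set Ef : X → X := fun x => if h : x ∈ W then ((e ⟨x, h⟩ : W) : X) else x with hEf
  set Eg : X → X := fun x => if h : x ∈ W then ((e.symm ⟨x, h⟩ : W) : X) else x with hEg
  have hEfW : ∀ (x : X) (h : x ∈ W), Ef x = ((e ⟨x, h⟩ : W) : X) := by
    intro x h; simp only [hEf, dif_pos h]
  have hEfW' : ∀ z : W, Ef (z : X) = ((e z : X)) := by
    intro z; rw [hEfW _ z.2]
  have hEgW' : ∀ z : W, Eg (z : X) = ((e.symm z : X)) := by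
    intro z; simp only [hEg, dif_pos z.2]
  have hEfid : ∀ x, x ∉ W → Ef x = x := fun x h => by simp only [hEf, dif_neg h]
  have hEgid : ∀ x, x ∉ W → Eg x = x := fun x h => by simp only [hEg, dif_neg h]
  have hleft : Function.LeftInverse Eg Ef := by
    intro x
    by_cases h : x ∈ W
    · rw [hEfW x h]
      rw [hEgW' (e ⟨x, h⟩)]
      rw [e.symm_apply_apply]
    · rw [hEfid x h, hEgid x h]
  have hright : Function.RightInverse Eg Ef := by
    intro x
    by_cases h : x ∈ W
    · have : Eg x = ((e.symm ⟨x, h⟩ : W) : X) := hEgW' ⟨x, h⟩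
      rw [this, hEfW' (e.symm ⟨x, h⟩), e.apply_symm_apply]
    · rw [hEgid x h, hEfid x h]
  -- continuity
  have contAux : ∀ (F : X → X), (∀ (z : W), F (z:X) = ((e z : X)) ∨ ∀ (z : W), F (z:X) = ((e.symm z : X))) → True := fun _ _ => trivial
  have key : ∀ (F : X → X) (e' : W ≃ₜ W), (∀ z : W, F (z : X) = ((e' z : X))) →
      (∀ x, x ∉ W → F x = x) →
      (∀ z : W, dist ((e' z : X)) (z : X) ≤ nd Wᶜ (z : X)) → Continuous F := by
    intro F e' hFW hFid hdist
    rw [continuous_iff_continuousAt]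
    intro x
    by_cases hx : x ∈ W
    · have hcW : ContinuousOn F W := by
        rw [continuousOn_iff_continuous_restrict]
        have : W.restrict F = fun z : W => ((e' z : X)) := by
          funext z
          simp only [Set.restrict]
          exact hFW z
        rw [show W.domRestrict F = _ from this]
        exact continuous_subtype_val.comp e'.continuous
      exact hcW.continuousAt (hW.mem_nhds hx)
    · rw [Metric.continuousAt_iff]
      intro δ hδ
      refine ⟨δ/2, by positivity, ?_⟩
      intro y hy
      rw [hFid x hx]
      by_cases hyW : y ∈ W
      · have h1 : dist (F y) y ≤ nd Wᶜ y := by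
          rw [hFW ⟨y, hyW⟩]
          exact hdist ⟨y, hyW⟩
        have h2 : nd Wᶜ y ≤ dist y x := nd_le_dist y (by simpa using hx)
        calc dist (F y) x ≤ dist (F y) y + dist y x := dist_triangle _ _ _
          _ ≤ dist y x + dist y x := by linarith
          _ < δ := by linarith
      · rw [hFid y hyW]
        linarith
  have contEf : Continuous Ef := key Ef e hEfW' hEfid heW
  have contEg : Continuous Eg := key Eg e.symm hEgW' hEgid he'
  exact ⟨⟨⟨Ef, Eg, hleft, hright⟩, contEf, contEg⟩, hEfW', hEfid⟩


/-! ### choosing a fine cover -/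

lemma goodCover (F : X ≃ₜ X) {W : Set X} (hW : IsOpen W) {ε : X → ℝ}
    (hlip : ∀ x y, ε x ≤ ε y + dist x y)
    (hpos : ∀ y ∈ W, 0 < ε y) (hpos' : ∀ y ∈ W, 0 < ε (F.symm y))
    {c : ℝ} (hc0 : 0 < c) (hc1 : c ≤ 1) {t : ℝ} (ht : 0 < t) :
    ∃ 𝒱 : Set (Set X), (∀ v ∈ 𝒱, IsOpen v) ∧ (W ⊆ ⋃₀ 𝒱) ∧
      ∀ v ∈ 𝒱, ∀ a ∈ v, ∀ b ∈ v,
        dist a b ≤ t ∧ dist a b ≤ (1/2) * nd Wᶜ b ∧ dist a b ≤ c * ε b ∧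
        dist (F.symm a) (F.symm b) ≤ t ∧ dist (F.symm a) (F.symm b) ≤ c * ε (F.symm b) := by
  classical
  set r : X → ℝ := fun y => (1/8) * min (min t (nd Wᶜ y)) (c * ε y) with hr
  set s : X → ℝ := fun y => (1/8) * min t (c * ε (F.symm y)) with hs
  set v : X → Set X := fun y => ball y (r y) ∩ (F.symm) ⁻¹' (ball (F.symm y) (s y)) with hv
  refine ⟨v '' W, ?_, ?_, ?_⟩
  · rintro _ ⟨y, _, rfl⟩
    exact (isOpen_ball).inter (F.symm.continuous.isOpen_preimage _ isOpen_ball)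
  · intro y hy
    have hrpos : 0 < r y := by
      have h1 := nd_pos hW.isClosed_compl (show y ∉ Wᶜ by simpa using hy)
      have h2 := hpos y hy
      have : 0 < c * ε y := mul_pos hc0 h2
      simp only [hr]
      have : 0 < min (min t (nd Wᶜ y)) (c * ε y) := lt_min (lt_min ht h1) this
      linarith
    have hspos : 0 < s y := by
      have h2 := hpos' y hy
      have : 0 < c * ε (F.symm y) := mul_pos hc0 h2
      simp only [hs]
      have : 0 < min t (c * ε (F.symm y)) := lt_min ht this
      linarith
    exact ⟨v y, ⟨y, hy, rfl⟩, by
      simp only [hv, mem_inter_iff, mem_ball, mem_preimage]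
      exact ⟨by simpa using hrpos, by simpa using hspos⟩⟩
  · rintro _ ⟨y, hyW, rfl⟩ a ha b hb
    obtain ⟨ha1, ha2⟩ := ha
    obtain ⟨hb1, hb2⟩ := hb
    rw [mem_ball] at ha1 hb1
    rw [mem_preimage, mem_ball] at ha2 hb2
    have hab : dist a b ≤ r y + r y := by
      calc dist a b ≤ dist a y + dist y b := dist_triangle _ _ _
        _ = dist a y + dist b y := by rw [dist_comm y b]
        _ ≤ r y + r y := by linarith
    have hab' : dist (F.symm a) (F.symm b) ≤ s y + s y := by
      calc dist (F.symm a) (F.symm b)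
          ≤ dist (F.symm a) (F.symm y) + dist (F.symm y) (F.symm b) := dist_triangle _ _ _
        _ = dist (F.symm a) (F.symm y) + dist (F.symm b) (F.symm y) := by
            rw [dist_comm (F.symm y)]
        _ ≤ s y + s y := by linarith
    have hrt : r y ≤ t/8 := by
      simp only [hr]
      have : min (min t (nd Wᶜ y)) (c * ε y) ≤ t := le_trans (min_le_left _ _) (min_le_left _ _)
      linarith
    have hrnd : r y ≤ nd Wᶜ y / 8 := by
      simp only [hr]
      have : min (min t (nd Wᶜ y)) (c * ε y) ≤ nd Wᶜ y :=
        le_trans (min_le_left _ _) (min_le_right _ _)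
      linarith
    have hrε : r y ≤ c * ε y / 8 := by
      simp only [hr]
      have : min (min t (nd Wᶜ y)) (c * ε y) ≤ c * ε y := min_le_right _ _
      linarith
    have hst : s y ≤ t/8 := by
      simp only [hs]
      have : min t (c * ε (F.symm y)) ≤ t := min_le_left _ _
      linarith
    have hsε : s y ≤ c * ε (F.symm y) / 8 := by
      simp only [hs]
      have : min t (c * ε (F.symm y)) ≤ c * ε (F.symm y) := min_le_right _ _
      linarith
    have hry : 0 < r y := lt_of_le_of_lt dist_nonneg ha1
    have hsy : 0 < s y := lt_of_le_of_lt dist_nonneg ha2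
    refine ⟨by linarith, ?_, ?_, by linarith, ?_⟩
    · -- dist a b ≤ (1/2) * nd Wᶜ b
      have h1 : nd Wᶜ y ≤ nd Wᶜ b + dist y b := nd_lip _ _ _
      have h2 : dist y b = dist b y := dist_comm _ _
      linarith
    · -- dist a b ≤ c * ε b
      have h1 : ε y ≤ ε b + dist y b := hlip _ _
      have h2 : dist y b = dist b y := dist_comm _ _
      have h3 : c * ε y ≤ c * (ε b + dist b y) := by
        rw [← h2]; exact mul_le_mul_of_nonneg_left h1 (le_of_lt hc0)
      have h4 : c * dist b y ≤ dist b y := by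
        nlinarith [dist_nonneg (x := b) (y := y)]
      nlinarith
    · -- dist (F.symm a) (F.symm b) ≤ c * ε (F.symm b)
      have h1 : ε (F.symm y) ≤ ε (F.symm b) + dist (F.symm y) (F.symm b) := hlip _ _
      have h2 : dist (F.symm y) (F.symm b) = dist (F.symm b) (F.symm y) := dist_comm _ _
      have h3 : c * ε (F.symm y) ≤ c * (ε (F.symm b) + dist (F.symm b) (F.symm y)) := by
        rw [← h2]; exact mul_le_mul_of_nonneg_left h1 (le_of_lt hc0)
      have h4 : c * dist (F.symm b) (F.symm y) ≤ dist (F.symm b) (F.symm y) := by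
        nlinarith [dist_nonneg (x := F.symm b) (y := F.symm y)]
      nlinarith


/-! ### limits of sequences of homeomorphisms -/

lemma chainBound (u : ℕ → X) (hu : ∀ n, dist (u (n+1)) (u n) ≤ (1/2 : ℝ)^n) :
    ∀ n m, n ≤ m → dist (u m) (u n) ≤ 4 * ((1/2:ℝ)^n - (1/2:ℝ)^m) := by
  intro n m hnm
  induction m, hnm using Nat.le_induction with
  | base => simp
  | succ m hnm ih =>
    have h1 := hu m
    have h2 : dist (u (m+1)) (u n) ≤ dist (u (m+1)) (u m) + dist (u m) (u n) :=
      dist_triangle _ _ _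
    have h3 : (1/2:ℝ)^(m+1) = (1/2:ℝ)^m / 2 := by ring
    have h4 : (0:ℝ) ≤ (1/2:ℝ)^m := by positivity
    linarith

lemma chainBound' (u : ℕ → X) (hu : ∀ n, dist (u (n+1)) (u n) ≤ (1/2 : ℝ)^n) :
    ∀ n m, n ≤ m → dist (u m) (u n) ≤ 4 * (1/2:ℝ)^n := by
  intro n m hnm
  have := chainBound u hu n m hnm
  have h2 : (0:ℝ) < (1/2:ℝ)^m := by positivity
  linarith

lemma limitHomeo [CompleteSpace X] (f : ℕ → X ≃ₜ X)
    (h1 : ∀ n x, dist (f (n+1) x) (f n x) ≤ (1/2:ℝ)^n)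
    (h2 : ∀ n y, dist ((f (n+1)).symm y) ((f n).symm y) ≤ (1/2:ℝ)^n) :
    ∃ F : X ≃ₜ X, (∀ x, Tendsto (fun n => f n x) atTop (𝓝 (F x))) ∧
      (∀ y, Tendsto (fun n => (f n).symm y) atTop (𝓝 (F.symm y))) := by
  classical
  have hcau : ∀ x, CauchySeq (fun n => f n x) := by
    intro x
    apply cauchySeq_of_le_geometric (1/2) 1 (by norm_num)
    intro n
    rw [dist_comm]
    simpa using h1 n x
  have hcau' : ∀ y, CauchySeq (fun n => (f n).symm y) := by
    intro y
    apply cauchySeq_of_le_geometric (1/2) 1 (by norm_num)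
    intro n
    rw [dist_comm]
    simpa using h2 n y
  choose Φ hΦ using fun x => cauchySeq_tendsto_of_complete (hcau x)
  choose Ψ hΨ using fun y => cauchySeq_tendsto_of_complete (hcau' y)
  have hΦd : ∀ x n, dist (Φ x) (f n x) ≤ 4 * (1/2:ℝ)^n := by
    intro x n
    refine le_of_tendsto ((hΦ x).dist (tendsto_const_nhds (x := f n x))) ?_
    filter_upwards [eventually_ge_atTop n] with m hm
    exact chainBound' (fun k => f k x) (fun k => h1 k x) n m hm
  have hΨd : ∀ y n, dist (Ψ y) ((f n).symm y) ≤ 4 * (1/2:ℝ)^n := by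
    intro y n
    refine le_of_tendsto ((hΨ y).dist (tendsto_const_nhds (x := (f n).symm y))) ?_
    filter_upwards [eventually_ge_atTop n] with m hm
    exact chainBound' (fun k => (f k).symm y) (fun k => h2 k y) n m hm
  have contAux : ∀ (G : X → X) (g : ℕ → X ≃ₜ X),
      (∀ x n, dist (G x) (g n x) ≤ 4 * (1/2:ℝ)^n) → Continuous G := by
    intro G g hGd
    rw [continuous_iff_continuousAt]
    intro x
    rw [Metric.continuousAt_iff]
    intro δ hδ
    obtain ⟨n, hn⟩ : ∃ n : ℕ, (1/2:ℝ)^n < δ/12 := exists_pow_lt_of_lt_one (by linarith) (by norm_num)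
    have hc := (g n).continuous.continuousAt (x := x)
    rw [Metric.continuousAt_iff] at hc
    obtain ⟨δ', hδ', hballs⟩ := hc (δ/3) (by linarith)
    refine ⟨δ', hδ', ?_⟩
    intro y hy
    have hb := hballs hy
    calc dist (G y) (G x) ≤ dist (G y) (g n y) + dist (g n y) (G x) := dist_triangle _ _ _
      _ ≤ dist (G y) (g n y) + (dist (g n y) (g n x) + dist (g n x) (G x)) := by
          have := dist_triangle (g n y) (g n x) (G x); linarith
      _ < δ := by
          have e1 := hGd y n
          have e2 := hGd x n
          rw [dist_comm (g n x) (G x)] at *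
          linarith
  have contΦ : Continuous Φ := contAux Φ f hΦd
  have contΨ : Continuous Ψ := contAux Ψ (fun n => (f n).symm) hΨd
  have hΨΦ : ∀ x, Ψ (Φ x) = x := by
    intro x
    have t1 : Tendsto (fun n => Ψ (f n x)) atTop (𝓝 (Ψ (Φ x))) :=
      (contΨ.tendsto (Φ x)).comp (hΦ x)
    have t2 : Tendsto (fun n => Ψ (f n x)) atTop (𝓝 x) := by
      rw [tendsto_iff_dist_tendsto_zero]
      have hbd : ∀ n, dist (Ψ (f n x)) x ≤ 8 * (1/2:ℝ)^n := by
        intro n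
        have e1 : dist (Ψ (f n x)) ((f n).symm (f n x)) ≤ 4 * (1/2:ℝ)^n := hΨd (f n x) n
        have e2 : (f n).symm (f n x) = x := (f n).symm_apply_apply x
        rw [e2] at e1
        have h4 : (0:ℝ) ≤ (1/2:ℝ)^n := by positivity
        linarith
      have hb2 : Tendsto (fun n : ℕ => 8 * (1/2:ℝ)^n) atTop (𝓝 0) := by
        have := tendsto_pow_atTop_nhds_zero_of_lt_one (r := (1/2:ℝ)) (by norm_num) (by norm_num)
        simpa using this.const_mul 8
      exact squeeze_zero (fun n => dist_nonneg) hbd hb2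
    exact tendsto_nhds_unique t1 t2
  have hΦΨ : ∀ y, Φ (Ψ y) = y := by
    intro y
    have t1 : Tendsto (fun n => Φ ((f n).symm y)) atTop (𝓝 (Φ (Ψ y))) :=
      (contΦ.tendsto (Ψ y)).comp (hΨ y)
    have t2 : Tendsto (fun n => Φ ((f n).symm y)) atTop (𝓝 y) := by
      rw [tendsto_iff_dist_tendsto_zero]
      have hbd : ∀ n, dist (Φ ((f n).symm y)) y ≤ 8 * (1/2:ℝ)^n := by
        intro n
        have e1 : dist (Φ ((f n).symm y)) (f n ((f n).symm y)) ≤ 4 * (1/2:ℝ)^n :=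
          hΦd ((f n).symm y) n
        have e2 : f n ((f n).symm y) = y := (f n).apply_symm_apply y
        rw [e2] at e1
        have h4 : (0:ℝ) ≤ (1/2:ℝ)^n := by positivity
        linarith
      have hb2 : Tendsto (fun n : ℕ => 8 * (1/2:ℝ)^n) atTop (𝓝 0) := by
        have := tendsto_pow_atTop_nhds_zero_of_lt_one (r := (1/2:ℝ)) (by norm_num) (by norm_num)
        simpa using this.const_mul 8
      exact squeeze_zero (fun n => dist_nonneg) hbd hb2
    exact tendsto_nhds_unique t1 t2
  exact ⟨⟨⟨Φ, Ψ, hΨΦ, hΦΨ⟩, contΦ, contΨ⟩, hΦ, hΨ⟩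


/-! ### one absorption step -/

lemma halfStep {𝒦 : Set (Set X)} (hinv : TopInvariant 𝒦)
    {V : Set X} (hV : IsOpen V) {𝒰 : Set (Set X)} (h𝒰 : ∀ u ∈ 𝒰, IsOpen u) (hcov : V ⊆ ⋃₀ 𝒰)
    (T : Set X)
    (habs : ∀ K ∈ 𝒦, ∀ W : Set X, IsOpen W → ∀ 𝒱 : Set (Set X), (∀ u ∈ 𝒱, IsOpen u) →
        W ⊆ ⋃₀ 𝒱 →
        ∃ h : W ≃ₜ W, (∀ x : W, (x : X) ∈ K → (h x : X) ∈ T) ∧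
          ∀ x : W, (h x : X) = (x : X) ∨ ∃ u ∈ 𝒱, (h x : X) ∈ u ∧ (x : X) ∈ u)
    (S : Set X) (hS : S ∈ 𝒦)
    (g : X ≃ₜ X) (hgV : ∀ x ∉ V, g x = x)
    (C : Set X) (hC : IsClosed C)
    (hplaced : ∀ x ∈ S, x ∈ V → g x ∈ C → g x ∈ T)
    (m : ℕ) :
    ∃ E : X ≃ₜ X,
      (∀ x, x ∉ V \ C → E x = x) ∧
      (∀ x ∈ S, x ∈ V → E (g x) ∈ T) ∧
      (∀ x, dist (E x) x ≤ min ((1/2:ℝ)^m) ((1/2:ℝ)^m/16 * eps V 𝒰 x)) ∧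
      (∀ y, dist (g.symm (E.symm y)) (g.symm y) ≤
        min ((1/2:ℝ)^m) ((1/2:ℝ)^m/16 * eps V 𝒰 (g.symm y))) := by
  classical
  set W : Set X := V \ C with hWdef
  have hWopen : IsOpen W := hV.sdiff hC
  have hWV : W ⊆ V := diff_subset
  set c : ℝ := (1/2:ℝ)^m/16 with hcdef
  have hc0 : 0 < c := by positivity
  have hc1 : c ≤ 1 := by
    have : (1/2:ℝ)^m ≤ 1 := pow_le_one₀ (by norm_num) (by norm_num)
    simp only [hcdef]; linarith
  have ht : (0:ℝ) < (1/2:ℝ)^m := by positivity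
  obtain ⟨𝒱, h𝒱open, h𝒱cov, h𝒱⟩ := goodCover (X := X) g hWopen (eps_lip V 𝒰)
    (fun y hy => eps_pos hV h𝒰 hcov (hWV hy))
    (fun y hy => eps_pos hV h𝒰 hcov
      (idOff_mem g.symm (idOff_symm g hgV) y (hWV hy)))
    hc0 hc1 ht
  have hK : g '' S ∈ 𝒦 := inv_mem hinv g hS
  obtain ⟨e, habse, hecov⟩ := habs (g '' S) hK W hWopen 𝒱 h𝒱open h𝒱cov
  -- pointwise bounds for `e`
  have P1 : ∀ z : W, dist ((e z : X)) (z : X) ≤ (1/2) * nd Wᶜ (z : X) := by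
    intro z
    rcases hecov z with h | ⟨v, hv, hev, hzv⟩
    · rw [h, dist_self]; have := nd_nonneg Wᶜ (z : X); linarith
    · exact (h𝒱 v hv _ hev _ hzv).2.1
  have P2 : ∀ z : W, dist ((e z : X)) (z : X) ≤ (1/2:ℝ)^m := by
    intro z
    rcases hecov z with h | ⟨v, hv, hev, hzv⟩
    · rw [h, dist_self]; positivity
    · exact (h𝒱 v hv _ hev _ hzv).1
  have P3 : ∀ z : W, dist ((e z : X)) (z : X) ≤ c * eps V 𝒰 (z : X) := by
    intro z
    rcases hecov z with h | ⟨v, hv, hev, hzv⟩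
    · rw [h, dist_self]
      exact mul_nonneg (le_of_lt hc0) (eps_nonneg _ _ _)
    · exact (h𝒱 v hv _ hev _ hzv).2.2.1
  have P45 : ∀ z : W, dist (g.symm (z : X)) (g.symm ((e z : X))) ≤
      min ((1/2:ℝ)^m) (c * eps V 𝒰 (g.symm ((e z : X)))) := by
    intro z
    rcases hecov z with h | ⟨v, hv, hev, hzv⟩
    · rw [h, dist_self]
      exact le_min (le_of_lt ht) (mul_nonneg (le_of_lt hc0) (eps_nonneg _ _ _))
    · have := h𝒱 v hv _ hzv _ hev
      exact le_min this.2.2.2.1 this.2.2.2.2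
  obtain ⟨E, hEe, hEid⟩ := extendHomeo hWopen e P1
  have hEsid : ∀ x, x ∉ W → E.symm x = x := idOff_symm (s := W) E hEid
  have hEsymm : ∀ z : W, E.symm (z : X) = ((e.symm z : X)) := by
    intro z
    have h := hEe (e.symm z)
    rw [e.apply_symm_apply] at h
    rw [← h, Homeomorph.symm_apply_apply]
  refine ⟨E, fun x hx => hEid x hx, ?_, ?_, ?_⟩
  · -- absorption
    intro x hxS hxV
    have hgxV : g x ∈ V := idOff_mem g hgV x hxV
    by_cases hgW : g x ∈ W
    · rw [hEe ⟨g x, hgW⟩]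
      exact habse ⟨g x, hgW⟩ ⟨x, hxS, rfl⟩
    · have hgC : g x ∈ C := by
        by_contra hc
        exact hgW ⟨hgxV, hc⟩
      rw [hEid (g x) hgW]
      exact hplaced x hxS hxV hgC
  · -- forward bound
    intro x
    by_cases hx : x ∈ W
    · have h := hEe ⟨x, hx⟩
      rw [h]
      exact le_min (P2 ⟨x, hx⟩) (P3 ⟨x, hx⟩)
    · rw [hEid x hx, dist_self]
      exact le_min (le_of_lt ht) (mul_nonneg (le_of_lt hc0) (eps_nonneg _ _ _))
  · -- inverse bound
    intro y
    by_cases hy : y ∈ W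
    · have hz := hEsymm ⟨y, hy⟩
      have hey : ((e (e.symm ⟨y, hy⟩) : W) : X) = y := by rw [e.apply_symm_apply]
      have := P45 (e.symm ⟨y, hy⟩)
      rw [hey] at this
      rw [hz]
      exact this
    · rw [hEsid y hy, dist_self]
      exact le_min (le_of_lt ht) (mul_nonneg (le_of_lt hc0) (eps_nonneg _ _ _))


/-! ### the inductive construction -/

lemma g2Arith {p ε d₁ d₂ : ℝ} (hp0 : 0 ≤ p) (hp1 : p ≤ 1) (hε : 0 ≤ ε)
    (h1 : d₁ ≤ p/16 * (ε + d₂))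
    (h2 : d₂ ≤ (1-p)/4 * ε) (hd₂ : 0 ≤ d₂) :
    d₁ + d₂ ≤ (1 - p/2)/4 * ε := by
  nlinarith [mul_nonneg hp0 hε, mul_nonneg hp0 hd₂, mul_nonneg (mul_nonneg hp0 hp0) hε,
    mul_nonneg (mul_nonneg hp0 hp0) hd₂]

def Good (V : Set X) (𝒰 : Set (Set X)) (A A' : ℕ → Set X) (B B' : Set X)
    (m : ℕ) (f : X ≃ₜ X) : Prop :=
  (∀ x ∉ V, f x = x) ∧
  (∀ x, dist (f x) x ≤ (1 - (1/2:ℝ)^m)/4 * eps V 𝒰 x) ∧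
  (∀ i, 2*i+1 ≤ m → ∀ x ∈ A i, x ∈ V → f x ∈ B') ∧
  (∀ i, 2*i+2 ≤ m → ∀ y ∈ A' i, y ∈ V → f.symm y ∈ B)

def Step (V : Set X) (A A' : ℕ → Set X) (m : ℕ) (f f' : X ≃ₜ X) : Prop :=
  (∀ x, dist (f' x) (f x) ≤ (1/2:ℝ)^m) ∧
  (∀ y, dist (f'.symm y) (f.symm y) ≤ (1/2:ℝ)^m) ∧
  (∀ i, 2*i+1 ≤ m → ∀ x ∈ A i, x ∈ V → f' x = f x) ∧
  (∀ i, 2*i+2 ≤ m → ∀ y ∈ A' i, y ∈ V → f'.symm y = f.symm y)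

lemma fix_symm (E : X ≃ₜ X) {x : X} (h : E x = x) : E.symm x = x := by
  conv_lhs => rw [← h]
  rw [Homeomorph.symm_apply_apply]

lemma stepEx {𝒦 : Set (Set X)} (hcl : ∀ K ∈ 𝒦, IsClosed K) (hinv : TopInvariant 𝒦)
    {V : Set X} (hV : IsOpen V) {𝒰 : Set (Set X)} (h𝒰 : ∀ u ∈ 𝒰, IsOpen u) (hcov : V ⊆ ⋃₀ 𝒰)
    {A A' : ℕ → Set X} {B B' : Set X}
    (hA : ∀ n, A n ∈ 𝒦) (hA' : ∀ n, A' n ∈ 𝒦)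
    (hsub : ∀ n, A n ⊆ B) (hsub' : ∀ n, A' n ⊆ B')
    (habsB : ∀ K ∈ 𝒦, ∀ W : Set X, IsOpen W → ∀ 𝒱 : Set (Set X), (∀ u ∈ 𝒱, IsOpen u) →
        W ⊆ ⋃₀ 𝒱 →
        ∃ h : W ≃ₜ W, (∀ x : W, (x : X) ∈ K → (h x : X) ∈ B) ∧
          ∀ x : W, (h x : X) = (x : X) ∨ ∃ u ∈ 𝒱, (h x : X) ∈ u ∧ (x : X) ∈ u)
    (habsB' : ∀ K ∈ 𝒦, ∀ W : Set X, IsOpen W → ∀ 𝒱 : Set (Set X), (∀ u ∈ 𝒱, IsOpen u) →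
        W ⊆ ⋃₀ 𝒱 →
        ∃ h : W ≃ₜ W, (∀ x : W, (x : X) ∈ K → (h x : X) ∈ B') ∧
          ∀ x : W, (h x : X) = (x : X) ∨ ∃ u ∈ 𝒱, (h x : X) ∈ u ∧ (x : X) ∈ u)
    (m : ℕ) (f : X ≃ₜ X) (hf : Good V 𝒰 A A' B B' m f) :
    ∃ f', Good V 𝒰 A A' B B' (m+1) f' ∧ Step V A A' m f f' := by
  classical
  obtain ⟨J1, J2, J3, J4⟩ := hf
  have hp0 : (0:ℝ) ≤ (1/2:ℝ)^m := by positivity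
  have hp1 : (1/2:ℝ)^m ≤ 1 := pow_le_one₀ (by norm_num) (by norm_num)
  have hphalf : (1/2:ℝ)^(m+1) = (1/2:ℝ)^m/2 := by ring
  rcases Nat.even_or_odd m with ⟨n, hn⟩ | ⟨n, hn⟩
  · -- m = n + n : absorb A n into B'
    set C : Set X := (⋃ i ∈ Finset.range n, f '' A i) ∪ ⋃ i ∈ Finset.range n, A' i with hCdef
    have hCcl : IsClosed C := by
      apply IsClosed.union
      · exact Set.Finite.isClosed_biUnion (Finset.range n).finite_toSet
          (fun i _ => f.isClosedMap _ (hcl _ (hA i)))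
      · exact Set.Finite.isClosed_biUnion (Finset.range n).finite_toSet
          (fun i _ => hcl _ (hA' i))
    have hplaced : ∀ x ∈ A n, x ∈ V → f x ∈ C → f x ∈ B' := by
      intro x hx hxV hfC
      rcases hfC with h | h
      · simp only [Set.mem_iUnion, Finset.mem_range] at h
        obtain ⟨i, hi, hfi⟩ := h
        obtain ⟨x', hx', hfx'⟩ := hfi
        have hxx : x' = x := f.injective hfx'
        subst hxx
        exact J3 i (by omega) x' hx' hxV
      · simp only [Set.mem_iUnion, Finset.mem_range] at h
        obtain ⟨i, _, hfi⟩ := h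
        exact hsub' i hfi
    obtain ⟨E, hE1, hE2, hE3, hE4⟩ := halfStep hinv hV h𝒰 hcov B' habsB'
      (A n) (hA n) f J1 C hCcl hplaced m
    have hEC : ∀ x ∈ C, E x = x := fun x hx => hE1 x (fun hmem => hmem.2 hx)
    have hEV : ∀ x, x ∉ V → E x = x := fun x hx => hE1 x (fun hmem => hx hmem.1)
    set f' : X ≃ₜ X := f.trans E with hf'def
    have hf'app : ∀ x, f' x = E (f x) := fun x => rfl
    have hf'symm : ∀ y, f'.symm y = f.symm (E.symm y) := fun y => rfl
    have hG1 : ∀ x ∉ V, f' x = x := by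
      intro x hx
      rw [hf'app, J1 x hx, hEV x hx]
    have hS3 : ∀ i, 2*i+1 ≤ m → ∀ x ∈ A i, x ∈ V → f' x = f x := by
      intro i hi x hxA hxV
      rw [hf'app]
      apply hEC
      left
      simp only [Set.mem_iUnion, Finset.mem_range]
      exact ⟨i, by omega, x, hxA, rfl⟩
    have hS4 : ∀ i, 2*i+2 ≤ m → ∀ y ∈ A' i, y ∈ V → f'.symm y = f.symm y := by
      intro i hi y hyA hyV
      rw [hf'symm]
      have hyC : y ∈ C := by
        right
        simp only [Set.mem_iUnion, Finset.mem_range]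
        exact ⟨i, by omega, hyA⟩
      rw [fix_symm E (hEC y hyC)]
    refine ⟨f', ⟨hG1, ?_, ?_, ?_⟩, ?_, ?_, hS3, hS4⟩
    · -- distance invariant
      intro x
      by_cases hxV : x ∈ V
      · have h1 : dist (f' x) x ≤ dist (E (f x)) (f x) + dist (f x) x := by
          rw [hf'app]; exact dist_triangle _ _ _
        have h2 : dist (E (f x)) (f x) ≤ (1/2:ℝ)^m/16 * eps V 𝒰 (f x) :=
          le_trans (hE3 (f x)) (min_le_right _ _)
        have h3 : eps V 𝒰 (f x) ≤ eps V 𝒰 x + dist (f x) x := eps_lip _ _ _ _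
        have h4 := J2 x
        have h5 := eps_nonneg V 𝒰 x
        have h6 : dist (E (f x)) (f x) ≤ (1/2:ℝ)^m/16 * (eps V 𝒰 x + dist (f x) x) := by
          refine le_trans h2 (mul_le_mul_of_nonneg_left h3 (by positivity))
        have := g2Arith hp0 hp1 h5 h6 h4 dist_nonneg
        rw [hphalf]
        linarith
      · rw [hG1 x hxV, dist_self]
        have h5 := eps_nonneg V 𝒰 x
        have : (0:ℝ) ≤ (1 - (1/2:ℝ)^(m+1))/4 := by
          rw [hphalf]; linarith
        positivity
    · -- J3 for m+1
      intro i hi x hxA hxV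
      by_cases hin : i = n
      · subst hin
        rw [hf'app]
        exact hE2 x hxA hxV
      · have hilt : 2*i+1 ≤ m := by omega
        rw [hS3 i hilt x hxA hxV]
        exact J3 i hilt x hxA hxV
    · -- J4 for m+1
      intro i hi y hyA hyV
      have hilt : 2*i+2 ≤ m := by omega
      rw [hS4 i hilt y hyA hyV]
      exact J4 i hilt y hyA hyV
    · -- forward step bound
      intro x
      rw [hf'app]
      exact le_trans (hE3 (f x)) (min_le_left _ _)
    · -- inverse step bound
      intro y
      rw [hf'symm]
      exact le_trans (hE4 y) (min_le_left _ _)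
  · -- m = 2n+1 : absorb A' n into B (via the inverse)
    set C : Set X := (⋃ i ∈ Finset.range (n+1), A i) ∪ ⋃ i ∈ Finset.range n, f.symm '' A' i
      with hCdef
    have hCcl : IsClosed C := by
      apply IsClosed.union
      · exact Set.Finite.isClosed_biUnion (Finset.range (n+1)).finite_toSet
          (fun i _ => hcl _ (hA i))
      · exact Set.Finite.isClosed_biUnion (Finset.range n).finite_toSet
          (fun i _ => f.symm.isClosedMap _ (hcl _ (hA' i)))
    have hgV : ∀ x ∉ V, f.symm x = x := idOff_symm f J1
    have hplaced : ∀ y ∈ A' n, y ∈ V → f.symm y ∈ C → f.symm y ∈ B := by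
      intro y hy hyV hfC
      rcases hfC with h | h
      · simp only [Set.mem_iUnion, Finset.mem_range] at h
        obtain ⟨i, _, hfi⟩ := h
        exact hsub i hfi
      · simp only [Set.mem_iUnion, Finset.mem_range] at h
        obtain ⟨i, hi, y', hy', hfy'⟩ := h
        have hyy : y' = y := f.symm.injective hfy'
        subst hyy
        exact J4 i (by omega) y' hy' hyV
    obtain ⟨E, hE1, hE2, hE3, hE4⟩ := halfStep hinv hV h𝒰 hcov B habsB
      (A' n) (hA' n) f.symm hgV C hCcl hplaced m
    simp only [Homeomorph.symm_symm] at hE4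
    have hEC : ∀ x ∈ C, E x = x := fun x hx => hE1 x (fun hmem => hmem.2 hx)
    have hEV : ∀ x, x ∉ V → E x = x := fun x hx => hE1 x (fun hmem => hx hmem.1)
    have hEsC : ∀ x ∈ C, E.symm x = x := fun x hx => fix_symm E (hEC x hx)
    have hEsV : ∀ x, x ∉ V → E.symm x = x := fun x hx => fix_symm E (hEV x hx)
    set f' : X ≃ₜ X := E.symm.trans f with hf'def
    have hf'app : ∀ x, f' x = f (E.symm x) := fun x => rfl
    have hf'symm : ∀ y, f'.symm y = E (f.symm y) := fun y => rfl
    have hG1 : ∀ x ∉ V, f' x = x := by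
      intro x hx
      rw [hf'app, hEsV x hx, J1 x hx]
    have hS3 : ∀ i, 2*i+1 ≤ m → ∀ x ∈ A i, x ∈ V → f' x = f x := by
      intro i hi x hxA hxV
      rw [hf'app]
      have hxC : x ∈ C := by
        left
        simp only [Set.mem_iUnion, Finset.mem_range]
        exact ⟨i, by omega, hxA⟩
      rw [hEsC x hxC]
    have hS4 : ∀ i, 2*i+2 ≤ m → ∀ y ∈ A' i, y ∈ V → f'.symm y = f.symm y := by
      intro i hi y hyA hyV
      rw [hf'symm]
      apply hEC
      right
      simp only [Set.mem_iUnion, Finset.mem_range]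
      exact ⟨i, by omega, y, hyA, rfl⟩
    refine ⟨f', ⟨hG1, ?_, ?_, ?_⟩, ?_, ?_, hS3, hS4⟩
    · -- distance invariant
      intro x
      by_cases hxV : x ∈ V
      · have h1 : dist (f' x) x ≤ dist (f (E.symm x)) (f x) + dist (f x) x := by
          rw [hf'app]; exact dist_triangle _ _ _
        have h2 : dist (f (E.symm x)) (f x) ≤ (1/2:ℝ)^m/16 * eps V 𝒰 (f x) :=
          le_trans (hE4 x) (min_le_right _ _)
        have h3 : eps V 𝒰 (f x) ≤ eps V 𝒰 x + dist (f x) x := eps_lip _ _ _ _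
        have h4 := J2 x
        have h5 := eps_nonneg V 𝒰 x
        have h6 : dist (f (E.symm x)) (f x) ≤ (1/2:ℝ)^m/16 * (eps V 𝒰 x + dist (f x) x) :=
          le_trans h2 (mul_le_mul_of_nonneg_left h3 (by positivity))
        have := g2Arith hp0 hp1 h5 h6 h4 dist_nonneg
        rw [hphalf]
        linarith
      · rw [hG1 x hxV, dist_self]
        have h5 := eps_nonneg V 𝒰 x
        have : (0:ℝ) ≤ (1 - (1/2:ℝ)^(m+1))/4 := by
          rw [hphalf]; linarith
        positivity
    · -- J3 for m+1
      intro i hi x hxA hxV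
      have hilt : 2*i+1 ≤ m := by omega
      rw [hS3 i hilt x hxA hxV]
      exact J3 i hilt x hxA hxV
    · -- J4 for m+1
      intro i hi y hyA hyV
      by_cases hin : i = n
      · subst hin
        rw [hf'symm]
        exact hE2 y hyA hyV
      · have hilt : 2*i+2 ≤ m := by omega
        rw [hS4 i hilt y hyA hyV]
        exact J4 i hilt y hyA hyV
    · -- forward step bound
      intro x
      rw [hf'app]
      exact le_trans (hE4 x) (min_le_left _ _)
    · -- inverse step bound
      intro y
      rw [hf'symm]
      exact le_trans (hE3 (f.symm y)) (min_le_left _ _)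


/-! ### building the chain -/

def buildChain {α : Type*} (G : ℕ → α → Prop) (St : ℕ → α → α → Prop) (a0 : α) (h0 : G 0 a0)
    (step : ∀ m a, G m a → ∃ b, G (m+1) b ∧ St m a b) : ∀ m, {a : α // G m a}
  | 0 => ⟨a0, h0⟩
  | (m+1) =>
    let p := buildChain G St a0 h0 step m
    ⟨(step m p.1 p.2).choose, (step m p.1 p.2).choose_spec.1⟩

lemma buildChain_step {α : Type*} (G : ℕ → α → Prop) (St : ℕ → α → α → Prop) (a0 : α)
    (h0 : G 0 a0) (step : ∀ m a, G m a → ∃ b, G (m+1) b ∧ St m a b) (m : ℕ) :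
    St m (buildChain G St a0 h0 step m).1 (buildChain G St a0 h0 step (m+1)).1 :=
  (step m (buildChain G St a0 h0 step m).1 (buildChain G St a0 h0 step m).2).choose_spec.2

/-! ### the main metric lemma -/

lemma mainMetric {X : Type*} [MetricSpace X] [CompleteSpace X]
    (𝒦 : Set (Set X)) (hcl : ∀ K ∈ 𝒦, IsClosed K) (hinv : TopInvariant 𝒦)
    (B B' : Set X) (hB : IsAbsorptive 𝒦 B) (hB' : IsAbsorptive 𝒦 B')
    (V : Set X) (hV : IsOpen V) (𝒰 : Set (Set X)) (h𝒰 : ∀ u ∈ 𝒰, IsOpen u)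
    (hcov : V ⊆ ⋃₀ 𝒰) :
    ∃ h : V ≃ₜ V, (∀ x : V, ((x : X) ∈ B ↔ (h x : X) ∈ B')) ∧
      ∀ x : V, (h x : X) = (x : X) ∨ ∃ u ∈ 𝒰, (h x : X) ∈ u ∧ (x : X) ∈ u := by
  classical
  obtain ⟨A, hA, hBA⟩ := hB.1
  obtain ⟨A', hA', hBA'⟩ := hB'.1
  have hsub : ∀ n, A n ⊆ B := by
    intro n
    rw [hBA]
    exact subset_iUnion A n
  have hsub' : ∀ n, A' n ⊆ B' := by
    intro n
    rw [hBA']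
    exact subset_iUnion A' n
  have good0 : Good V 𝒰 A A' B B' 0 (Homeomorph.refl X) := by
    refine ⟨fun x _ => rfl, ?_, ?_, ?_⟩
    · intro x
      simp [eps_nonneg]
    · intro i hi; omega
    · intro i hi; omega
  set chain := buildChain (Good V 𝒰 A A' B B') (Step V A A') (Homeomorph.refl X) good0
    (stepEx hcl hinv hV h𝒰 hcov hA hA' hsub hsub' hB.2 hB'.2) with hchain
  set g : ℕ → X ≃ₜ X := fun m => (chain m).1 with hg
  have hgood : ∀ m, Good V 𝒰 A A' B B' m (g m) := fun m => (chain m).2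
  have hstep : ∀ m, Step V A A' m (g m) (g (m+1)) := fun m =>
    buildChain_step (Good V 𝒰 A A' B B') (Step V A A') (Homeomorph.refl X) good0
      (stepEx hcl hinv hV h𝒰 hcov hA hA' hsub hsub' hB.2 hB'.2) m
  obtain ⟨H, hfor, hbak⟩ := limitHomeo g (fun m x => (hstep m).1 x) (fun m y => (hstep m).2.1 y)
  -- basic facts about the limit
  have hd0 : ∀ m x, dist (g m x) x ≤ eps V 𝒰 x / 4 := by
    intro m x
    have h1 := (hgood m).2.1 x
    have h2 : (0:ℝ) ≤ (1/2:ℝ)^m := by positivity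
    have h3 := eps_nonneg V 𝒰 x
    nlinarith
  have F1 : ∀ x, dist (H x) x ≤ eps V 𝒰 x / 4 := by
    intro x
    refine le_of_tendsto ((hfor x).dist (tendsto_const_nhds (x := x))) ?_
    exact Filter.Eventually.of_forall (fun m => hd0 m x)
  have F2 : ∀ y, dist (H.symm y) y ≤ eps V 𝒰 y / 3 := by
    intro y
    refine le_of_tendsto ((hbak y).dist (tendsto_const_nhds (x := y))) ?_
    refine Filter.Eventually.of_forall (fun m => ?_)
    have h1 := hd0 m ((g m).symm y)
    rw [(g m).apply_symm_apply] at h1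
    have h2 : eps V 𝒰 ((g m).symm y) ≤ eps V 𝒰 y + dist ((g m).symm y) y := eps_lip _ _ _ _
    have h3 : dist y ((g m).symm y) = dist ((g m).symm y) y := dist_comm _ _
    linarith
  have F5 : ∀ x, x ∉ V → H x = x := by
    intro x hx
    refine tendsto_nhds_unique (hfor x) ?_
    have : (fun m => g m x) = fun _ => x := funext (fun m => (hgood m).1 x hx)
    rw [this]
    exact tendsto_const_nhds
  have F5' : ∀ y, y ∉ V → H.symm y = y := by
    intro y hy
    refine tendsto_nhds_unique (hbak y) ?_
    have : (fun m => (g m).symm y) = fun _ => y :=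
      funext (fun m => idOff_symm (g m) ((hgood m).1) y hy)
    rw [this]
    exact tendsto_const_nhds
  have F6 : ∀ x, x ∈ V → H x ∈ V := by
    intro x hx
    by_cases hfix : H x = x
    · rw [hfix]; exact hx
    · by_contra hHV
      have h1 : nd Vᶜ x ≤ dist x (H x) := nd_le_dist x (by simpa using hHV)
      have h2 := F1 x
      have h3 : eps V 𝒰 x ≤ nd Vᶜ x := eps_le_nd _ _ _
      have h4 : 0 < dist (H x) x := dist_pos.2 hfix
      rw [dist_comm] at h1
      linarith
  have F7 : ∀ y, y ∈ V → H.symm y ∈ V := by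
    intro y hy
    by_cases hfix : H.symm y = y
    · rw [hfix]; exact hy
    · by_contra hHV
      have h1 : nd Vᶜ y ≤ dist y (H.symm y) := nd_le_dist y (by simpa using hHV)
      have h2 := F2 y
      have h3 : eps V 𝒰 y ≤ nd Vᶜ y := eps_le_nd _ _ _
      have h4 : 0 < dist (H.symm y) y := dist_pos.2 hfix
      rw [dist_comm] at h1
      linarith
  -- eventual constancy and placement
  have hconstF : ∀ i x, x ∈ A i → x ∈ V → ∀ m, 2*i+1 ≤ m → g m x = g (2*i+1) x := by
    intro i x hxA hxV m hm
    induction m, hm using Nat.le_induction with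
    | base => rfl
    | succ m hm ih =>
      rw [(hstep m).2.2.1 i hm x hxA hxV, ih]
  have hconstB : ∀ i y, y ∈ A' i → y ∈ V → ∀ m, 2*i+2 ≤ m → (g m).symm y = (g (2*i+2)).symm y := by
    intro i y hyA hyV m hm
    induction m, hm using Nat.le_induction with
    | base => rfl
    | succ m hm ih =>
      rw [(hstep m).2.2.2 i hm y hyA hyV, ih]
  have F3 : ∀ i x, x ∈ A i → x ∈ V → H x ∈ B' := by
    intro i x hxA hxV
    have h1 : H x = g (2*i+1) x := by
      refine tendsto_nhds_unique (hfor x) ?_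
      refine Tendsto.congr' ?_ (tendsto_const_nhds (x := g (2*i+1) x))
      filter_upwards [eventually_ge_atTop (2*i+1)] with m hm
      exact (hconstF i x hxA hxV m hm).symm
    rw [h1]
    exact (hgood (2*i+1)).2.2.1 i (le_refl _) x hxA hxV
  have F4 : ∀ i y, y ∈ A' i → y ∈ V → H.symm y ∈ B := by
    intro i y hyA hyV
    have h1 : H.symm y = (g (2*i+2)).symm y := by
      refine tendsto_nhds_unique (hbak y) ?_
      refine Tendsto.congr' ?_ (tendsto_const_nhds (x := (g (2*i+2)).symm y))
      filter_upwards [eventually_ge_atTop (2*i+2)] with m hm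
      exact (hconstB i y hyA hyV m hm).symm
    rw [h1]
    exact (hgood (2*i+2)).2.2.2 i (le_refl _) y hyA hyV
  -- the restricted homeomorphism
  refine ⟨⟨⟨fun x => ⟨H x, F6 x.1 x.2⟩, fun y => ⟨H.symm y, F7 y.1 y.2⟩, ?_, ?_⟩, ?_, ?_⟩, ?_, ?_⟩
  · intro x
    exact Subtype.ext (H.symm_apply_apply x)
  · intro y
    exact Subtype.ext (H.apply_symm_apply y)
  · exact (H.continuous.comp continuous_subtype_val).subtype_mk _
  · exact (H.symm.continuous.comp continuous_subtype_val).subtype_mk _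
  · -- the equivalence B ↔ B'
    intro x
    constructor
    · intro hxB
      rw [hBA] at hxB
      obtain ⟨i, hi⟩ := mem_iUnion.1 hxB
      exact F3 i x hi x.2
    · intro hB'
      have hHV : (H x : X) ∈ V := F6 x.1 x.2
      rw [hBA'] at hB'
      obtain ⟨i, hi⟩ := mem_iUnion.1 hB'
      have := F4 i (H x) hi hHV
      rw [H.symm_apply_apply] at this
      exact this
  · -- closeness
    intro x
    by_cases hfix : H x = x
    · exact Or.inl hfix
    · right
      exact eps_extract hfix (F1 x)


end AbsorbAux

end

open AbsorbAux

/-- Uniqueness theorem for `𝒦`-absorptive sets in a Polish space: if `𝒦` is a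
topologically invariant family of closed sets and `B`, `B'` are `𝒦`-absorptive, then for
every open `V` and every open cover `𝒰` of `V` there is a homeomorphism `h : V → V` with
`h(V ∩ B) = V ∩ B'` and `(h, id_V) ≺ 𝒰`; in particular, `B` and `B'` are ambiently
homeomorphic. -/
theorem absorptive_unique {X : Type*} [TopologicalSpace X] [PolishSpace X]
    (𝒦 : Set (Set X)) (hcl : ∀ K ∈ 𝒦, IsClosed K) (hinv : TopInvariant 𝒦)
    (B B' : Set X) (hB : IsAbsorptive 𝒦 B) (hB' : IsAbsorptive 𝒦 B') :
    (∀ V : Set X, IsOpen V → ∀ 𝒰 : Set (Set X), (∀ u ∈ 𝒰, IsOpen u) → V ⊆ ⋃₀ 𝒰 →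
      ∃ h : V ≃ₜ V, (∀ x : V, ((x : X) ∈ B ↔ (h x : X) ∈ B')) ∧
        ∀ x : V, (h x : X) = (x : X) ∨ ∃ u ∈ 𝒰, (h x : X) ∈ u ∧ (x : X) ∈ u) ∧
    ∃ h : X ≃ₜ X, h '' B = B' := by
  letI := TopologicalSpace.upgradeIsCompletelyMetrizable X
  have main : ∀ V : Set X, IsOpen V → ∀ 𝒰 : Set (Set X), (∀ u ∈ 𝒰, IsOpen u) → V ⊆ ⋃₀ 𝒰 →
      ∃ h : V ≃ₜ V, (∀ x : V, ((x : X) ∈ B ↔ (h x : X) ∈ B')) ∧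
        ∀ x : V, (h x : X) = (x : X) ∨ ∃ u ∈ 𝒰, (h x : X) ∈ u ∧ (x : X) ∈ u := by
    intro V hV 𝒰 h𝒰 hcov
    exact mainMetric 𝒦 hcl hinv B B' hB hB' V hV 𝒰 h𝒰 hcov
  refine ⟨main, ?_⟩
  obtain ⟨h, hiff, -⟩ := main Set.univ isOpen_univ {Set.univ} (by
      rintro u rfl; exact isOpen_univ) (by simp)
  set e : (Set.univ : Set X) ≃ₜ X := Homeomorph.Set.univ X with he
  refine ⟨(e.symm.trans h).trans e, ?_⟩
  have happ : ∀ x : X, ((e.symm.trans h).trans e) x = ((h ⟨x, trivial⟩ : (Set.univ : Set X)) : X) := by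
    intro x
    rfl
  ext y
  constructor
  · rintro ⟨x, hxB, rfl⟩
    rw [happ]
    exact (hiff ⟨x, trivial⟩).1 hxB
  · intro hyB'
    refine ⟨((h.symm ⟨y, trivial⟩ : (Set.univ : Set X)) : X), ?_, ?_⟩
    · have := (hiff (h.symm ⟨y, trivial⟩)).2
      rw [h.apply_symm_apply] at this
      exact this hyB'
    · rw [happ]; exact congrArg Subtype.val (h.apply_symm_apply ⟨y, trivial⟩)
end

section
/- Let X be a Polish space and 𝒦 a topologically invariant family of closed subsets of X, and assume some 𝒦-absorptive set B ⊆ X exists. Then a subset A ⊆ X is σ𝒦-universal in X if and only if A is 𝒦-absorptive. -/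
open Set Topology

open Metric Filter

lemma mem_of_topInvariant {X : Type*} [TopologicalSpace X] {𝒦 : Set (Set X)}
    (hinv : TopInvariant 𝒦) (g : X ≃ₜ X) {K : Set X} (hK : K ∈ 𝒦) : g '' K ∈ 𝒦 := by
  have h := hinv g
  rw [← h]
  exact mem_image_of_mem _ hK



section MetricAux

variable {X : Type*} [MetricSpace X]

lemma my_cont_ext {V : Set X} (hV : IsOpen V) (e : X → X)
    (h1 : ContinuousOn e V) (h2 : ∀ x, x ∉ V → e x = x)
    (h3 : ∀ x, ∀ b, b ∉ V → dist (e x) x ≤ dist x b) : Continuous e := by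
  rw [continuous_iff_continuousAt]
  intro b
  by_cases hb : b ∈ V
  · exact h1.continuousAt (hV.mem_nhds hb)
  · rw [Metric.continuousAt_iff]
    intro ε hε
    refine ⟨ε / 2, by linarith, fun x hx => ?_⟩
    rw [h2 b hb]
    calc dist (e x) b ≤ dist (e x) x + dist x b := dist_triangle _ _ _
      _ ≤ dist x b + dist x b := by have := h3 x b hb; linarith
      _ < ε := by linarith

lemma my_extend_homeo {V : Set X} (hV : IsOpen V) (g : V ≃ₜ V)
    (hg : ∀ (x : V) (b : X), b ∉ V → dist (g x : X) x ≤ 2⁻¹ * dist (x : X) b) :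
    ∃ G : X ≃ₜ X, (∀ x : V, G x = g x) ∧ ∀ x, x ∉ V → G x = x := by
  classical
  set e : X → X := fun x => if h : x ∈ V then (g ⟨x, h⟩ : X) else x with he
  set e' : X → X := fun x => if h : x ∈ V then (g.symm ⟨x, h⟩ : X) else x with he'
  have heV : ∀ x : V, e x = g x := fun x => by
    simp only [e, dif_pos x.2, Subtype.coe_eta]
  have heV' : ∀ x : V, e' x = g.symm x := fun x => by
    simp only [e', dif_pos x.2, Subtype.coe_eta]
  have heN : ∀ x, x ∉ V → e x = x := fun x hx => by simp only [e, dif_neg hx]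
  have heN' : ∀ x, x ∉ V → e' x = x := fun x hx => by simp only [e', dif_neg hx]
  have hli : Function.LeftInverse e' e := by
    intro x
    by_cases hx : x ∈ V
    · rw [show e x = ((g ⟨x, hx⟩ : V) : X) from heV ⟨x, hx⟩, heV' (g ⟨x, hx⟩)]
      simp
    · rw [heN x hx, heN' x hx]
  have hri : Function.RightInverse e' e := by
    intro x
    by_cases hx : x ∈ V
    · rw [show e' x = ((g.symm ⟨x, hx⟩ : V) : X) from heV' ⟨x, hx⟩, heV (g.symm ⟨x, hx⟩)]
      simp
    · rw [heN' x hx, heN x hx]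
  have hcV : ContinuousOn e V := by
    rw [continuousOn_iff_continuous_restrict]
    have : V.domRestrict e = fun x : V => (g x : X) := funext fun x => heV x
    rw [this]
    exact continuous_subtype_val.comp g.continuous
  have hcV' : ContinuousOn e' V := by
    rw [continuousOn_iff_continuous_restrict]
    have : V.domRestrict e' = fun x : V => (g.symm x : X) := funext fun x => heV' x
    rw [this]
    exact continuous_subtype_val.comp g.symm.continuous
  have hb : ∀ x, ∀ b, b ∉ V → dist (e x) x ≤ dist x b := by
    intro x b hbn
    by_cases hx : x ∈ V
    · rw [heV ⟨x, hx⟩]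
      calc dist (g ⟨x, hx⟩ : X) x ≤ 2⁻¹ * dist x b := hg ⟨x, hx⟩ b hbn
        _ ≤ dist x b := by have := dist_nonneg (x := x) (y := b); linarith
    · rw [heN x hx, dist_self]; exact dist_nonneg
  have hb' : ∀ x, ∀ b, b ∉ V → dist (e' x) x ≤ dist x b := by
    intro x b hbn
    by_cases hx : x ∈ V
    · rw [heV' ⟨x, hx⟩]
      set w : V := g.symm ⟨x, hx⟩ with hw
      have hgw : (g w : X) = x := by simp [hw]
      have h1 : dist (w : X) (g w : X) ≤ 2⁻¹ * dist (w : X) b := by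
        rw [dist_comm]; exact hg w b hbn
      have h2 : dist (w : X) b ≤ dist (w : X) x + dist x b := dist_triangle _ _ _
      rw [hgw] at h1
      rw [dist_comm]
      rw [dist_comm (w : X) x] at h2
      nlinarith [dist_comm (w : X) x, dist_nonneg (x := (w:X)) (y := x)]
    · rw [heN' x hx, dist_self]; exact dist_nonneg
  refine ⟨⟨⟨e, e', hli, hri⟩, my_cont_ext hV e hcV heN hb, my_cont_ext hV e' hcV' heN' hb'⟩,
    fun x => heV x, heN⟩

lemma my_step {𝒦 : Set (Set X)} {A : Set X} (hA : IsAbsorptive 𝒦 A)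
    {K : Set X} (hK : K ∈ 𝒦) {V : Set X} (hV : IsOpen V)
    {ε : ℝ} (hε : 0 < ε) {ι : Type*} [Fintype ι] (φ : ι → X → X)
    (hφ : ∀ i, Continuous (φ i)) :
    ∃ G : X ≃ₜ X, (∀ x, x ∉ V → G x = x) ∧ (∀ x, x ∈ K → x ∈ V → G x ∈ A) ∧
      (∀ x, dist (G x) x ≤ ε) ∧ (∀ i x, dist (φ i (G x)) (φ i x) ≤ ε) := by
  classical
  have hrad : ∀ z ∈ V, ∃ δ : ℝ, 0 < δ ∧ δ ≤ ε / 4 ∧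
      (∀ x ∈ ball z δ, ∀ i, dist (φ i x) (φ i z) ≤ ε / 2) ∧
      (∀ b, b ∉ V → 8 * δ ≤ dist z b) := by
    intro z hz
    have hΦ : Continuous (fun x => fun i : ι => φ i x) :=
      continuous_pi fun i => hφ i
    have hcau : ContinuousAt (fun x => fun i : ι => φ i x) z := hΦ.continuousAt
    rw [Metric.continuousAt_iff] at hcau
    obtain ⟨δ₁, hδ₁, hδ₁p⟩ := hcau (ε / 2) (by linarith)
    have hη : ∃ η : ℝ, 0 < η ∧ ∀ b, b ∉ V → 8 * η ≤ dist z b := by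
      rcases eq_empty_or_nonempty Vᶜ with hVc | hVc
      · exact ⟨1, one_pos, fun b hb => absurd (by simpa using hb : b ∈ Vᶜ)
          (by simp [hVc])⟩
      · have hzp : 0 < infDist z Vᶜ :=
          (hV.isClosed_compl.notMem_iff_infDist_pos hVc).mp (by simpa using hz)
        refine ⟨infDist z Vᶜ / 8, by linarith, fun b hb => ?_⟩
        have := infDist_le_dist_of_mem (x := z) (show b ∈ Vᶜ by simpa using hb)
        linarith
    obtain ⟨η, hηp, hηb⟩ := hη
    refine ⟨min (min (ε / 4) δ₁) η, by positivity, le_trans (min_le_left _ _) (min_le_left _ _),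
      fun x hx i => ?_, fun b hb => ?_⟩
    · have hlt : dist x z < δ₁ := lt_of_lt_of_le hx
        (le_trans (min_le_left _ _) (min_le_right _ _))
      have := hδ₁p hlt
      calc dist (φ i x) (φ i z)
          ≤ dist (fun i : ι => φ i x) (fun i : ι => φ i z) :=
            dist_le_pi_dist (fun i : ι => φ i x) (fun i : ι => φ i z) i
        _ ≤ ε / 2 := le_of_lt this
    · have := hηb b hb
      have : 8 * min (min (ε / 4) δ₁) η ≤ 8 * η := by
        have := min_le_right (min (ε / 4) δ₁) η; linarith
      linarith [hηb b hb]
  choose! δf hδpos hδε hδφ hδb using hrad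
  set 𝒰 : Set (Set X) := (fun z => ball z (δf z)) '' V with h𝒰
  have h𝒰open : ∀ u ∈ 𝒰, IsOpen u := by
    rintro u ⟨z, hz, rfl⟩; exact isOpen_ball
  have h𝒰cov : V ⊆ ⋃₀ 𝒰 := fun x hx =>
    ⟨ball x (δf x), ⟨x, hx, rfl⟩, mem_ball_self (hδpos x hx)⟩
  obtain ⟨g, hgA, hgU⟩ := hA.2 K hK V hV 𝒰 h𝒰open h𝒰cov
  have hpair : ∀ x : V, dist (g x : X) x ≤ ε ∧ (∀ i, dist (φ i (g x)) (φ i (x : X)) ≤ ε) ∧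
      ∀ b, b ∉ V → dist (g x : X) x ≤ 2⁻¹ * dist (x : X) b := by
    intro x
    rcases hgU x with heq | ⟨u, ⟨z, hz, rfl⟩, hau, hbu⟩
    · rw [heq]
      exact ⟨by simp [hε.le], fun i => by simp [hε.le],
        fun b hb => by simp⟩
    · have hδz := hδpos z hz
      have hδez := hδε z hz
      have h1 : dist (g x : X) (x : X) < 2 * δf z := by
        calc dist (g x : X) (x : X) ≤ dist (g x : X) z + dist z (x : X) := dist_triangle _ _ _
          _ < δf z + δf z := by
              rw [mem_ball] at hau hbu
              rw [dist_comm z (x : X)]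
              exact add_lt_add hau hbu
          _ = 2 * δf z := by ring
      refine ⟨by linarith, fun i => ?_, fun b hb => ?_⟩
      · have ha := hδφ z hz _ hau i
        have hb2 := hδφ z hz _ hbu i
        calc dist (φ i (g x)) (φ i (x : X))
            ≤ dist (φ i (g x)) (φ i z) + dist (φ i z) (φ i (x : X)) := dist_triangle _ _ _
          _ ≤ ε / 2 + ε / 2 := add_le_add ha (by rw [dist_comm]; exact hb2)
          _ = ε := by ring
      · have h8 := hδb z hz b hb
        have hzx : dist z (x : X) < δf z := by rwa [mem_ball, dist_comm] at hbu
        have hxb : dist (x : X) b ≥ 7 * δf z := by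
          have := dist_triangle z (x : X) b
          linarith
        linarith
  obtain ⟨G, hGV, hGN⟩ := my_extend_homeo hV g (fun x b hb => (hpair x).2.2 b hb)
  refine ⟨G, hGN, fun x hxK hxV => ?_, fun x => ?_, fun i x => ?_⟩
  · have := hGV ⟨x, hxV⟩
    rw [this]
    exact hgA ⟨x, hxV⟩ hxK
  · by_cases hx : x ∈ V
    · have := hGV ⟨x, hx⟩
      rw [this]
      exact (hpair ⟨x, hx⟩).1
    · rw [hGN x hx, dist_self]; exact hε.le
  · by_cases hx : x ∈ V
    · have := hGV ⟨x, hx⟩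
      rw [this]
      exact (hpair ⟨x, hx⟩).2.1 i
    · rw [hGN x hx, dist_self]; exact hε.le

lemma my_dist_lim (s : ℕ → X) (m0 : ℕ)
    (h : ∀ k, m0 ≤ k → dist (s k) (s (k + 1)) ≤ (1/2 : ℝ) ^ (k + 1))
    (l : X) (hl : Tendsto s atTop (𝓝 l)) : dist (s m0) l ≤ (1/2 : ℝ) ^ m0 := by
  set t : ℕ → X := fun k => s (k + m0) with ht
  have hu : ∀ k, dist (t k) (t (k + 1)) ≤ ((1/2 : ℝ) ^ (m0 + 1)) * (1/2 : ℝ) ^ k := by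
    intro k
    have := h (k + m0) (Nat.le_add_left _ _)
    calc dist (t k) (t (k + 1)) = dist (s (k + m0)) (s (k + m0 + 1)) := by
          simp only [ht]; ring_nf
      _ ≤ (1/2 : ℝ) ^ (k + m0 + 1) := this
      _ = ((1/2 : ℝ) ^ (m0 + 1)) * (1/2 : ℝ) ^ k := by ring
  have htt : Tendsto t atTop (𝓝 l) := hl.comp (tendsto_add_atTop_nat m0)
  have := dist_le_of_le_geometric_of_tendsto₀ (1/2 : ℝ) ((1/2 : ℝ) ^ (m0 + 1))
    (by norm_num) hu htt
  calc dist (s m0) l = dist (t 0) l := by simp [ht]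
    _ ≤ ((1/2 : ℝ) ^ (m0 + 1)) / (1 - 1/2) := this
    _ = (1/2 : ℝ) ^ m0 := by ring

lemma my_limit [CompleteSpace X] (F : ℕ → X ≃ₜ X)
    (h1 : ∀ k x, dist (F (k+1) x) (F k x) ≤ (1/2 : ℝ) ^ (k+1))
    (h2 : ∀ k m, m ≤ k → ∀ x,
      dist ((F m).symm (F (k+1) x)) ((F m).symm (F k x)) ≤ (1/2 : ℝ) ^ (k+1))
    (h3 : ∀ k m, m ≤ k → ∀ y,
      dist (F m ((F (k+1)).symm y)) (F m ((F k).symm y)) ≤ (1/2 : ℝ) ^ (k+1))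
    (h4 : ∀ k y, dist ((F (k+1)).symm y) ((F k).symm y) ≤ (1/2 : ℝ) ^ (k+1)) :
    ∃ Φ : X ≃ₜ X, ∀ x, Tendsto (fun k => F k x) atTop (𝓝 (Φ x)) := by
  have h2pos : (0:ℝ) < 1/2 := by norm_num
  -- forward limits
  have hcF : ∀ x, ∃ l, Tendsto (fun k => F k x) atTop (𝓝 l) := by
    intro x
    apply cauchySeq_tendsto_of_complete
    apply cauchySeq_of_le_geometric (1/2 : ℝ) (1/2 : ℝ) (by norm_num)
    intro k
    rw [dist_comm]
    calc dist (F (k+1) x) (F k x) ≤ (1/2:ℝ)^(k+1) := h1 k x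
      _ = 1/2 * (1/2:ℝ)^k := by ring
  choose Φ₀ hΦ₀ using hcF
  have hcG : ∀ y, ∃ l, Tendsto (fun k => (F k).symm y) atTop (𝓝 l) := by
    intro y
    apply cauchySeq_tendsto_of_complete
    apply cauchySeq_of_le_geometric (1/2 : ℝ) (1/2 : ℝ) (by norm_num)
    intro k
    rw [dist_comm]
    calc dist ((F (k+1)).symm y) ((F k).symm y) ≤ (1/2:ℝ)^(k+1) := h4 k y
      _ = 1/2 * (1/2:ℝ)^k := by ring
  choose Ψ₀ hΨ₀ using hcG
  have distF : ∀ m x, dist (F m x) (Φ₀ x) ≤ (1/2:ℝ)^m := by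
    intro m x
    exact my_dist_lim (fun k => F k x) m
      (fun k _ => by rw [dist_comm]; exact h1 k x) _ (hΦ₀ x)
  have distG : ∀ m y, dist ((F m).symm y) (Ψ₀ y) ≤ (1/2:ℝ)^m := by
    intro m y
    exact my_dist_lim (fun k => (F k).symm y) m
      (fun k _ => by rw [dist_comm]; exact h4 k y) _ (hΨ₀ y)
  have hpow : Tendsto (fun m : ℕ => (1/2:ℝ)^m) atTop (𝓝 0) :=
    tendsto_pow_atTop_nhds_zero_of_lt_one (by norm_num) (by norm_num)
  have contΦ : Continuous Φ₀ := by
    have htu : TendstoUniformly (fun k x => F k x) Φ₀ atTop := by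
      rw [Metric.tendstoUniformly_iff]
      intro ε hε
      filter_upwards [hpow.eventually (gt_mem_nhds hε)] with k hk x
      rw [dist_comm]
      exact lt_of_le_of_lt (distF k x) hk
    exact htu.continuous (Eventually.of_forall fun k => (F k).continuous).frequently
  have contΨ : Continuous Ψ₀ := by
    have htu : TendstoUniformly (fun k y => (F k).symm y) Ψ₀ atTop := by
      rw [Metric.tendstoUniformly_iff]
      intro ε hε
      filter_upwards [hpow.eventually (gt_mem_nhds hε)] with k hk y
      rw [dist_comm]
      exact lt_of_le_of_lt (distG k y) hk
    exact htu.continuous (Eventually.of_forall fun k => (F k).symm.continuous).frequently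
  have key1 : ∀ m x, dist ((F m).symm (Φ₀ x)) x ≤ (1/2:ℝ)^m := by
    intro m x
    have htt : Tendsto (fun k => (F m).symm (F k x)) atTop (𝓝 ((F m).symm (Φ₀ x))) :=
      ((F m).symm.continuous.tendsto _).comp (hΦ₀ x)
    have := my_dist_lim (fun k => (F m).symm (F k x)) m ?_ _ htt
    · rw [dist_comm]
      simpa using this
    · intro k hk
      rw [dist_comm]
      exact h2 k m hk x
  have key2 : ∀ m y, dist (F m (Ψ₀ y)) y ≤ (1/2:ℝ)^m := by
    intro m y
    have htt : Tendsto (fun k => F m ((F k).symm y)) atTop (𝓝 (F m (Ψ₀ y))) :=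
      ((F m).continuous.tendsto _).comp (hΨ₀ y)
    have := my_dist_lim (fun k => F m ((F k).symm y)) m ?_ _ htt
    · rw [dist_comm]
      simpa using this
    · intro k hk
      rw [dist_comm]
      exact h3 k m hk y
  have hleft : ∀ x, Ψ₀ (Φ₀ x) = x := by
    intro x
    have hd : ∀ m : ℕ, dist (Ψ₀ (Φ₀ x)) x ≤ 2 * (1/2:ℝ)^m := by
      intro m
      calc dist (Ψ₀ (Φ₀ x)) x
          ≤ dist (Ψ₀ (Φ₀ x)) ((F m).symm (Φ₀ x)) + dist ((F m).symm (Φ₀ x)) x :=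
            dist_triangle _ _ _
        _ ≤ (1/2:ℝ)^m + (1/2:ℝ)^m := by
            have := distG m (Φ₀ x)
            have := key1 m x
            rw [dist_comm (Ψ₀ (Φ₀ x))]
            linarith [distG m (Φ₀ x), key1 m x]
        _ = 2 * (1/2:ℝ)^m := by ring
    have : dist (Ψ₀ (Φ₀ x)) x ≤ 0 := by
      have h0 : Tendsto (fun m : ℕ => 2 * (1/2:ℝ)^m) atTop (𝓝 0) := by
        simpa using hpow.const_mul 2
      exact ge_of_tendsto' h0 hd
    simpa [dist_le_zero] using this
  have hright : ∀ y, Φ₀ (Ψ₀ y) = y := by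
    intro y
    have hd : ∀ m : ℕ, dist (Φ₀ (Ψ₀ y)) y ≤ 2 * (1/2:ℝ)^m := by
      intro m
      calc dist (Φ₀ (Ψ₀ y)) y
          ≤ dist (Φ₀ (Ψ₀ y)) (F m (Ψ₀ y)) + dist (F m (Ψ₀ y)) y := dist_triangle _ _ _
        _ ≤ (1/2:ℝ)^m + (1/2:ℝ)^m := by
            rw [dist_comm (Φ₀ (Ψ₀ y))]
            linarith [distF m (Ψ₀ y), key2 m y]
        _ = 2 * (1/2:ℝ)^m := by ring
    have : dist (Φ₀ (Ψ₀ y)) y ≤ 0 := by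
      have h0 : Tendsto (fun m : ℕ => 2 * (1/2:ℝ)^m) atTop (𝓝 0) := by
        simpa using hpow.const_mul 2
      exact ge_of_tendsto' h0 hd
    simpa [dist_le_zero] using this
  exact ⟨⟨⟨Φ₀, Ψ₀, hleft, hright⟩, contΦ, contΨ⟩, hΦ₀⟩

lemma my_absorb [CompleteSpace X] {𝒦 : Set (Set X)} {A : Set X}
    (hA : IsAbsorptive 𝒦 A) (hcl : ∀ K ∈ 𝒦, IsClosed K) (hinv : TopInvariant 𝒦)
    (f : ℕ → Set X) (hf : ∀ n, f n ∈ 𝒦) :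
    ∃ h : X ≃ₜ X, h '' (⋃ n, f n) ⊆ A := by
  classical
  -- the one-step existence statement
  have hstep : ∀ (Fs : ℕ → X ≃ₜ X) (k : ℕ), ∃ G : X ≃ₜ X,
      (∀ x, x ∈ (⋃ i ∈ Finset.range k, Fs k '' f i) → G x = x) ∧
      (∀ x, x ∈ Fs k '' f k → x ∉ (⋃ i ∈ Finset.range k, Fs k '' f i) → G x ∈ A) ∧
      (∀ x, dist (G x) x ≤ (1/2 : ℝ) ^ (k+1)) ∧
      (∀ m, m ≤ k → ∀ x, dist ((Fs m).symm (G x)) ((Fs m).symm x) ≤ (1/2 : ℝ) ^ (k+1)) ∧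
      (∀ m, m ≤ k → ∀ x,
        dist (Fs m ((Fs k).symm (G x))) (Fs m ((Fs k).symm x)) ≤ (1/2 : ℝ) ^ (k+1)) := by
    intro Fs k
    set C : Set X := ⋃ i ∈ Finset.range k, Fs k '' f i with hC
    have hCc : IsClosed C := by
      apply (Finset.range k).finite_toSet.isClosed_biUnion
      intro i _
      exact (Homeomorph.isClosed_image (Fs k)).mpr (hcl _ (hf i))
    have hKk : Fs k '' f k ∈ 𝒦 := mem_of_topInvariant hinv (Fs k) (hf k)
    have hVo : IsOpen Cᶜ := hCc.isOpen_compl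
    have hεp : (0:ℝ) < (1/2 : ℝ) ^ (k+1) := by positivity
    set φ : (Fin (k+1) ⊕ Fin (k+1)) → X → X :=
      Sum.elim (fun m x => (Fs (m : ℕ)).symm x)
        (fun m x => Fs (m : ℕ) ((Fs k).symm x)) with hφdef
    have hφc : ∀ i, Continuous (φ i) := by
      rintro (m | m)
      · exact (Fs (m : ℕ)).symm.continuous
      · exact (Fs (m : ℕ)).continuous.comp (Fs k).symm.continuous
    obtain ⟨G, hG1, hG2, hG3, hG4⟩ := my_step hA hKk hVo hεp φ hφc
    refine ⟨G, fun x hx => hG1 x (by simpa using hx), fun x hx hx' => hG2 x hx (by simpa using hx'),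
      hG3, fun m hm x => ?_, fun m hm x => ?_⟩
    · exact hG4 (Sum.inl ⟨m, Nat.lt_succ_of_le hm⟩) x
    · exact hG4 (Sum.inr ⟨m, Nat.lt_succ_of_le hm⟩) x
  choose stepG hs1 hs2 hs3 hs4 hs5 using hstep
  -- the recursion
  obtain ⟨H, H0, Hs⟩ : ∃ H : ℕ → ℕ → X ≃ₜ X, H 0 = (fun _ => Homeomorph.refl X) ∧
      ∀ k, H (k+1) = fun m =>
        if m ≤ k then H k m else (H k k).trans (stepG (H k) k) :=
    ⟨fun k => Nat.rec (fun _ => Homeomorph.refl X)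
      (fun k ih => fun m => if m ≤ k then ih m else (ih k).trans (stepG ih k)) k,
      rfl, fun k => rfl⟩
  set Fk : ℕ → X ≃ₜ X := fun k => H k k with hFk
  have coh : ∀ k m, m ≤ k → H k m = Fk m := by
    intro k
    induction k with
    | zero => intro m hm; interval_cases m; rfl
    | succ k ih =>
      intro m hm
      by_cases hmk : m ≤ k
      · rw [Hs k]
        simp only [if_pos hmk]
        exact ih m hmk
      · have : m = k + 1 := by omega
        subst this
        rfl
  have Fsucc : ∀ k, Fk (k+1) = (Fk k).trans (stepG (H k) k) := by
    intro k
    show H (k+1) (k+1) = _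
    rw [Hs k]
    simp [Nat.not_succ_le_self]
    rfl
  have Fsucc_apply : ∀ k x, Fk (k+1) x = stepG (H k) k (Fk k x) := by
    intro k x
    rw [Fsucc k]
    rfl
  have Fsucc_symm : ∀ k y, (Fk (k+1)).symm y = (Fk k).symm ((stepG (H k) k).symm y) := by
    intro k y
    rw [Fsucc k]
    rfl
  -- the four convergence estimates
  have h1 : ∀ k x, dist (Fk (k+1) x) (Fk k x) ≤ (1/2 : ℝ) ^ (k+1) := by
    intro k x
    rw [Fsucc_apply k x]
    exact hs3 (H k) k (Fk k x)
  have h2 : ∀ k m, m ≤ k → ∀ x,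
      dist ((Fk m).symm (Fk (k+1) x)) ((Fk m).symm (Fk k x)) ≤ (1/2 : ℝ) ^ (k+1) := by
    intro k m hm x
    rw [Fsucc_apply k x]
    have := hs4 (H k) k m hm (Fk k x)
    rwa [coh k m hm] at this
  have h4 : ∀ k y, dist ((Fk (k+1)).symm y) ((Fk k).symm y) ≤ (1/2 : ℝ) ^ (k+1) := by
    intro k y
    rw [Fsucc_symm k y]
    have := hs4 (H k) k k le_rfl ((stepG (H k) k).symm y)
    rw [coh k k le_rfl, Homeomorph.apply_symm_apply] at this
    rw [dist_comm]
    exact this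
  have h3 : ∀ k m, m ≤ k → ∀ y,
      dist (Fk m ((Fk (k+1)).symm y)) (Fk m ((Fk k).symm y)) ≤ (1/2 : ℝ) ^ (k+1) := by
    intro k m hm y
    rw [Fsucc_symm k y]
    have := hs5 (H k) k m hm ((stepG (H k) k).symm y)
    rw [coh k m hm, coh k k le_rfl, Homeomorph.apply_symm_apply] at this
    rw [dist_comm]
    exact this
  -- absorption invariant
  have habs : ∀ k i, i < k → Fk k '' f i ⊆ A := by
    intro k
    induction k with
    | zero => intro i hi; omega
    | succ k ih =>
      intro i hi y hy
      obtain ⟨x, hx, rfl⟩ := hy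
      rw [Fsucc_apply k x]
      by_cases hik : i < k
      · have hmem : Fk k x ∈ ⋃ j ∈ Finset.range k, H k k '' f j := by
          apply mem_biUnion (Finset.mem_coe.mpr (Finset.mem_range.mpr hik))
          exact mem_image_of_mem _ hx
        rw [hs1 (H k) k (Fk k x) hmem]
        exact ih i hik (mem_image_of_mem _ hx)
      · have hik' : i = k := by omega
        subst hik'
        by_cases hmem : Fk i x ∈ ⋃ j ∈ Finset.range i, H i i '' f j
        · rw [hs1 (H i) i (Fk i x) hmem]
          simp only [mem_iUnion] at hmem
          obtain ⟨j, hj, hmem⟩ := hmem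
          exact ih j (Finset.mem_range.mp (Finset.mem_coe.mp hj)) hmem
        · exact hs2 (H i) i (Fk i x) (mem_image_of_mem _ hx) hmem
  have hstab : ∀ k i, i < k → ∀ x ∈ f i, Fk (k+1) x = Fk k x := by
    intro k i hik x hx
    rw [Fsucc_apply k x]
    apply hs1 (H k) k (Fk k x)
    apply mem_biUnion (Finset.mem_coe.mpr (Finset.mem_range.mpr hik))
    exact mem_image_of_mem _ hx
  have hconst : ∀ i, ∀ x ∈ f i, ∀ k, i + 1 ≤ k → Fk k x = Fk (i+1) x := by
    intro i x hx k
    induction k with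
    | zero => omega
    | succ k ih =>
      intro hk
      rcases Nat.lt_or_ge (i+1) (k+1) with hlt | hge
      · have hik : i < k := by omega
        rw [hstab k i hik x hx]
        exact ih (by omega)
      · have : i + 1 = k + 1 := by omega
        rw [this]
  obtain ⟨Φ, hΦ⟩ := my_limit Fk h1 h2 h3 h4
  refine ⟨Φ, ?_⟩
  rintro y ⟨x, hx, rfl⟩
  rw [mem_iUnion] at hx
  obtain ⟨i, hi⟩ := hx
  have hconst' : Tendsto (fun k => Fk k x) atTop (𝓝 (Fk (i+1) x)) := by
    apply Tendsto.congr' _ tendsto_const_nhds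
    filter_upwards [eventually_ge_atTop (i+1)] with k hk
    exact (hconst i x hi k hk).symm
  have : Φ x = Fk (i+1) x := tendsto_nhds_unique (hΦ x) hconst'
  rw [this]
  exact habs (i+1) i (Nat.lt_succ_self i) (mem_image_of_mem _ hi)

end MetricAux

/-- Forward direction: a `σ𝒦`-universal set is absorptive, given some absorptive `B`. -/
lemma my_forward {X : Type*} [TopologicalSpace X] {𝒦 : Set (Set X)}
    (hinv : TopInvariant 𝒦) {B : Set X} (hB : IsAbsorptive 𝒦 B) {A : Set X}
    (hAσ : A ∈ sigmaFam 𝒦) (huniv : ∀ K ∈ sigmaFam 𝒦, ∃ h : X ≃ₜ X, h '' K ⊆ A) :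
    IsAbsorptive 𝒦 A := by
  refine ⟨hAσ, ?_⟩
  intro K hK V hV 𝒰 h𝒰o h𝒰c
  obtain ⟨g, hg⟩ := huniv B hB.1
  set V' : Set X := g.symm '' V with hV'def
  have hV'o : IsOpen V' := (Homeomorph.isOpen_image g.symm).mpr hV
  have hK' : g.symm '' K ∈ 𝒦 := mem_of_topInvariant hinv g.symm hK
  set 𝒰' : Set (Set X) := (fun u => g.symm '' u) '' 𝒰 with h𝒰'def
  have h𝒰'o : ∀ u ∈ 𝒰', IsOpen u := by
    rintro u' ⟨u, hu, rfl⟩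
    exact (Homeomorph.isOpen_image g.symm).mpr (h𝒰o u hu)
  have h𝒰'c : V' ⊆ ⋃₀ 𝒰' := by
    rintro y ⟨x, hx, rfl⟩
    obtain ⟨u, hu, hxu⟩ := h𝒰c hx
    exact ⟨g.symm '' u, mem_image_of_mem _ hu, mem_image_of_mem _ hxu⟩
  obtain ⟨h', hh'B, hh'U⟩ := hB.2 (g.symm '' K) hK' V' hV'o 𝒰' h𝒰'o h𝒰'c
  -- transport `h'` to a homeomorphism of `V`
  have hmemV : ∀ w : V', g (w : X) ∈ V := by
    rintro ⟨w, x, hxV, rfl⟩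
    simpa using hxV
  have hmemV' : ∀ v : V, g.symm (v : X) ∈ V' := fun v => mem_image_of_mem _ v.2
  set e : V' ≃ₜ V :=
    { toFun := fun w => ⟨g w, hmemV w⟩
      invFun := fun v => ⟨g.symm v, hmemV' v⟩
      left_inv := fun w => by ext; simp
      right_inv := fun v => by ext; simp
      continuous_toFun := by
        apply Continuous.subtype_mk
        exact g.continuous.comp continuous_subtype_val
      continuous_invFun := by
        apply Continuous.subtype_mk
        exact g.symm.continuous.comp continuous_subtype_val } with hedef
  refine ⟨(e.symm.trans h').trans e, fun x hxK => ?_, fun x => ?_⟩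
  · have h1 : ((e.symm.trans h').trans e x : X) = g (h' (e.symm x)) := rfl
    rw [h1]
    have h2 : ((e.symm x : V') : X) = g.symm x := rfl
    have h3 : ((e.symm x : V') : X) ∈ g.symm '' K := by
      rw [h2]; exact mem_image_of_mem _ hxK
    exact hg (mem_image_of_mem _ (hh'B (e.symm x) h3))
  · have h1 : ((e.symm.trans h').trans e x : X) = g (h' (e.symm x)) := rfl
    have h2 : ((e.symm x : V') : X) = g.symm x := rfl
    rcases hh'U (e.symm x) with heq | ⟨u', ⟨u, hu, rfl⟩, hin1, hin2⟩
    · left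
      rw [h1, heq, h2]
      simp
    · right
      refine ⟨u, hu, ?_, ?_⟩
      · obtain ⟨a, ha, haa⟩ := hin1
        rw [h1, ← haa]
        simpa using ha
      · obtain ⟨a, ha, haa⟩ := hin2
        rw [h2] at haa
        have : a = (x : X) := g.symm.injective haa
        rwa [← this]

/-- If a `𝒦`-absorptive set exists in a Polish space `X` (for a topologically invariant
family `𝒦` of closed sets), then a set `A ⊆ X` is `σ𝒦`-universal if and only if it is
`𝒦`-absorptive. -/
theorem sigmaK_universal_iff_absorptive {X : Type*} [TopologicalSpace X] [PolishSpace X]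
    (𝒦 : Set (Set X)) (hcl : ∀ K ∈ 𝒦, IsClosed K) (hinv : TopInvariant 𝒦)
    (B : Set X) (hB : IsAbsorptive 𝒦 B) (A : Set X) :
    (A ∈ sigmaFam 𝒦 ∧ ∀ K ∈ sigmaFam 𝒦, ∃ h : X ≃ₜ X, h '' K ⊆ A) ↔
      IsAbsorptive 𝒦 A := by
  constructor
  · rintro ⟨hAσ, huniv⟩
    exact my_forward hinv hB hAσ huniv
  · intro hA
    refine ⟨hA.1, fun K hKσ => ?_⟩
    obtain ⟨f, hf, rfl⟩ := hKσ
    letI := TopologicalSpace.upgradeIsCompletelyMetrizable X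
    exact my_absorb hA hcl hinv f hf
end
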